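/- Let 𝒜 be a unital commutative C*-algebra, let τ : 𝒜 → 𝒜 be a surjective map, and let A, B : H_𝒜 → H_𝒜 be injective, continuous, additive maps that are τ-quasi-modular, i.e. A(λx) = τ(λ)·A(x) and B(λx) = τ(λ)·B(x) for all λ ∈ 𝒜 and x ∈ H_𝒜. Suppose there is a family {x_i}_{i∈ℕ} with x₁ coordinately invertible such that {A x_i} is an orthogonal basis of the submodule A(H_𝒜) (⟨A x_i, A x_j⟩ = 0 for i ≠ j, each A x_i ≠ 0, and every element of A(H_𝒜) is a convergent 𝒜-linear combination of the A x_i) containing at least two elements. If for every x ∈ H_𝒜 there exists λ_x ∈ 𝒜 with B x = λ_x·A x, then there exists a single λ ∈ 𝒜 such that B x = λ·A x for all x ∈ H_𝒜. -/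

import Mathlib

/-- An axiomatization of the standard Hilbert C*-module `H_𝒜 = ℓ²(ℕ, 𝒜)` over a unital
C*-algebra `𝒜`: a left `𝒜`-module with an `𝒜`-valued inner product, `𝒜`-linear in the
first variable and conjugate `𝒜`-linear in the second, complete in the norm
`‖v‖ = ‖⟨v,v⟩‖^{1/2}`, together with a standard orthonormal basis `e : ℕ → M` whose
`𝒜`-linear span is dense. -/
structure StdHilbertModule (A : Type*) [CStarAlgebra A]
    (M : Type*) [NormedAddCommGroup M] [Module A M] where
  inner : M → M → A
  inner_add_left : ∀ x y z : M, inner (x + y) z = inner x z + inner y z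
  inner_add_right : ∀ x y z : M, inner x (y + z) = inner x y + inner x z
  inner_smul_left : ∀ (a : A) (x y : M), inner (a • x) y = a * inner x y
  inner_smul_right : ∀ (a : A) (x y : M), inner x (a • y) = inner x y * star a
  star_inner : ∀ x y : M, star (inner x y) = inner y x
  inner_self_nonneg : ∀ x : M, ∃ a : A, inner x x = star a * a
  norm_eq : ∀ x : M, ‖x‖ = Real.sqrt ‖inner x x‖
  complete : CompleteSpace M
  e : ℕ → M
  inner_e : ∀ i j : ℕ, inner (e i) (e j) = if i = j then 1 else 0
  dense_span : Dense ((Submodule.span A (Set.range e) : Submodule A M) : Set M)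

namespace StdHilbertModule

variable {A : Type*} [CStarAlgebra A] {M : Type*} [NormedAddCommGroup M] [Module A M]
  (S : StdHilbertModule A M)

/-- `x` is coordinately invertible: `x ≠ 0` and each `⟨e i, x⟩` is invertible or zero. -/
def CI (x : M) : Prop :=
  x ≠ 0 ∧ ∀ i : ℕ, IsUnit (S.inner (S.e i) x) ∨ S.inner (S.e i) x = 0

/-- The "rank one" operator `θ_{x,y} : ξ ↦ ⟨ξ,y⟩ • x`. -/
def theta (x y : M) : M → M := fun ξ => S.inner ξ y • x

/-- `𝓕(H_𝒜)`: all finite sums `Σ αᵢ θ_{xᵢ,yᵢ}`. -/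
def FinRank : Set (M → M) :=
  {T | ∃ (n : ℕ) (α : Fin n → A) (x y : Fin n → M),
    T = ∑ i : Fin n, α i • S.theta (x i) (y i)}

/-- `L_x = {θ_{x,g} : g ∈ H_𝒜}`. -/
def Lset (x : M) : Set (M → M) := {T | ∃ g : M, T = S.theta x g}

/-- `R_f = {θ_{z,f} : z ∈ H_𝒜}`. -/
def Rset (f : M) : Set (M → M) := {T | ∃ z : M, T = S.theta z f}

/-- `L_x^{CI} = {θ_{x,g} : g ∈ CI}`. -/
def LCI (x : M) : Set (M → M) := {T | ∃ g : M, S.CI g ∧ T = S.theta x g}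

/-- `R_f^{CI} = {θ_{z,f} : z ∈ CI}`. -/
def RCI (f : M) : Set (M → M) := {T | ∃ z : M, S.CI z ∧ T = S.theta z f}

/-- `Φ` is rank-one preserving. -/
def RankOnePreserving (Φ : (M → M) → (M → M)) : Prop :=
  ∀ x y : M, S.CI y → ∃ s t : M, S.CI t ∧ Φ (S.theta x y) = S.theta s t ∧ (x ≠ 0 → s ≠ 0)

/-- `Φ` maps `𝓕(H_𝒜)` into `𝓕(H_𝒜)`. -/
def MapsFinRank (Φ : (M → M) → (M → M)) : Prop :=
  ∀ T ∈ S.FinRank, Φ T ∈ S.FinRank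

/-- `Φ` is additive on `𝓕(H_𝒜)`. -/
def AdditiveOn (Φ : (M → M) → (M → M)) : Prop :=
  ∀ T U : M → M, T ∈ S.FinRank → U ∈ S.FinRank → Φ (T + U) = Φ T + Φ U

/-- `Dim_𝒜 Φ(L_x^{CI}) ≥ 2`. -/
def DimGe2 (Φ : (M → M) → (M → M)) (x : M) : Prop :=
  ∃ f₁ f₂ y₁ y₂ g₁ g₂ : M, S.CI f₁ ∧ S.CI f₂ ∧ S.CI g₁ ∧ S.CI g₂ ∧
    Φ (S.theta x f₁) = S.theta y₁ g₁ ∧ Φ (S.theta x f₂) = S.theta y₂ g₂ ∧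
    ∀ α : A, g₁ ≠ α • g₂

end StdHilbertModule

section Lemma9Aux

namespace StdHilbertModule

variable {A : Type*} [CStarAlgebra A] {M : Type*} [NormedAddCommGroup M] [Module A M]
  (S : StdHilbertModule A M)

/-- The inner product as an additive homomorphism in the first variable. -/
def innerL (y : M) : M →+ A :=
  AddMonoidHom.mk' (fun z => S.inner z y) (fun a b => S.inner_add_left a b y)

@[simp] lemma innerL_apply (y z : M) : S.innerL y z = S.inner z y := rfl

lemma inner_zero_left (y : M) : S.inner 0 y = 0 := map_zero (S.innerL y)

lemma inner_zero_right (y : M) : S.inner y 0 = 0 := by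
  have h := S.star_inner 0 y
  rw [S.inner_zero_left, star_zero] at h
  exact h.symm

lemma eq_zero_of_inner_self {z : M} (h : S.inner z z = 0) : z = 0 := by
  have h2 := S.norm_eq z
  rw [h, norm_zero, Real.sqrt_zero] at h2
  exact norm_eq_zero.mp h2

include S in
lemma norm_smul_le_aux (a : A) (z : M) : ‖a • z‖ ≤ ‖a‖ * ‖z‖ := by
  have h1 : S.inner (a • z) (a • z) = a * (S.inner z z * star a) := by
    rw [S.inner_smul_left, S.inner_smul_right]
  have h2 : ‖a * (S.inner z z * star a)‖ ≤ ‖a‖ * ‖a‖ * ‖S.inner z z‖ := by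
    calc ‖a * (S.inner z z * star a)‖ ≤ ‖a‖ * ‖S.inner z z * star a‖ := norm_mul_le _ _
      _ ≤ ‖a‖ * (‖S.inner z z‖ * ‖star a‖) :=
          mul_le_mul_of_nonneg_left (norm_mul_le _ _) (norm_nonneg a)
      _ = ‖a‖ * ‖a‖ * ‖S.inner z z‖ := by rw [norm_star]; ring
  rw [S.norm_eq (a • z), S.norm_eq z, h1]
  calc Real.sqrt ‖a * (S.inner z z * star a)‖
      ≤ Real.sqrt (‖a‖ * ‖a‖ * ‖S.inner z z‖) := Real.sqrt_le_sqrt h2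
    _ = ‖a‖ * Real.sqrt ‖S.inner z z‖ := by
        rw [Real.sqrt_mul (by positivity), Real.sqrt_mul_self (norm_nonneg a)]

end StdHilbertModule

namespace StdHilbertModule

variable {A : Type*} [CommCStarAlgebra A] {M : Type*} [NormedAddCommGroup M] [Module A M]
  (S : StdHilbertModule A M)

/-- Cauchy–Schwarz inequality for the axiomatized Hilbert module. -/
lemma cauchy_schwarz (x y : M) : ‖S.inner x y‖ ≤ ‖x‖ * ‖y‖ := by
  letI : PartialOrder A := CStarAlgebra.spectralOrder A
  haveI : StarOrderedRing A := CStarAlgebra.spectralOrderedRing A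
  set m := S.inner x x with hm
  set n := S.inner y y with hn
  set k := S.inner x y with hk
  set K := k * star k with hKdef
  have hKnorm : ‖K‖ = ‖k‖ * ‖k‖ := CStarRing.norm_self_mul_star
  have key : ∀ t : ℝ, 0 < t → 2 * t * ‖K‖ ≤ ‖m‖ + t ^ 2 * (‖K‖ * ‖n‖) := by
    intro t ht
    set rt : A := algebraMap ℂ A ((t : ℝ) : ℂ) with hrt
    set rs : A := algebraMap ℂ A ((Real.sqrt t : ℝ) : ℂ) with hrsdef
    have hrs2 : rs * rs = rt := by
      rw [hrsdef, hrt, ← map_mul]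
      congr 1
      norm_cast
      exact Real.mul_self_sqrt ht.le
    have hstar_rs : star rs = rs := by
      rw [hrsdef, ← algebraMap_star_comm]
      congr 1
      rw [Complex.star_def, Complex.conj_ofReal]
    have hstar_rt : star rt = rt := by
      rw [hrt, ← algebraMap_star_comm]
      congr 1
      rw [Complex.star_def, Complex.conj_ofReal]
    set c : A := -(rt * k) with hc
    have hsc : star c = -(rt * star k) := by
      rw [hc, star_neg, star_mul, hstar_rt]; ring
    obtain ⟨b, hb⟩ := S.inner_self_nonneg (x + c • y)
    have hexp : S.inner (x + c • y) (x + c • y)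
        = m + k * star c + c * star k + c * (n * star c) := by
      rw [S.inner_add_left, S.inner_add_right, S.inner_add_right,
        S.inner_smul_left, S.inner_smul_left, S.inner_smul_right, S.inner_smul_right,
        ← S.star_inner x y, ← hm, ← hn, ← hk]
      ring
    have hP : S.inner (x + c • y) (x + c • y)
        = (m + rt * rt * (K * n)) - (rt * K + rt * K) := by
      rw [hexp, hsc, hc, hKdef]; ring
    have ha2 : (0 : A) ≤ rt * K + rt * K := by
      have h1 : rt * K = (rs * k) * star (rs * k) := by
        rw [star_mul, hstar_rs, ← hrs2, hKdef]; ring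
      rw [h1]
      exact add_nonneg (mul_star_self_nonneg _) (mul_star_self_nonneg _)
    have hle : rt * K + rt * K ≤ m + rt * rt * (K * n) := by
      rw [← sub_nonneg]
      calc (0 : A) ≤ star b * b := star_mul_self_nonneg b
        _ = m + rt * rt * (K * n) - (rt * K + rt * K) := by rw [← hb, hP]
    have hnorm := CStarAlgebra.norm_le_norm_of_nonneg_of_le ha2 hle
    have hL : ‖rt * K + rt * K‖ = 2 * t * ‖K‖ := by
      have h2 : rt * K + rt * K = (((2 * t : ℝ) : ℂ)) • K := by
        have h3 : (((2 * t : ℝ) : ℂ)) = ((t : ℝ) : ℂ) + ((t : ℝ) : ℂ) := by push_cast; ring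
        rw [Algebra.smul_def, h3, map_add, ← hrt]; ring
      rw [h2, norm_smul, Complex.norm_real, Real.norm_eq_abs, abs_of_pos (by positivity)]
    have hR : ‖m + rt * rt * (K * n)‖ ≤ ‖m‖ + t ^ 2 * (‖K‖ * ‖n‖) := by
      have h3 : rt * rt * (K * n) = (((t * t : ℝ) : ℂ)) • (K * n) := by
        have h4 : (((t * t : ℝ) : ℂ)) = ((t : ℝ) : ℂ) * ((t : ℝ) : ℂ) := by push_cast; ring
        rw [Algebra.smul_def, h4, map_mul, ← hrt]
      have h5 : ‖K * n‖ ≤ ‖K‖ * ‖n‖ := norm_mul_le _ _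
      calc ‖m + rt * rt * (K * n)‖ ≤ ‖m‖ + ‖rt * rt * (K * n)‖ := norm_add_le _ _
        _ = ‖m‖ + (t * t) * ‖K * n‖ := by
            rw [h3, norm_smul, Complex.norm_real, Real.norm_eq_abs,
              abs_of_pos (by positivity)]
        _ ≤ ‖m‖ + t ^ 2 * (‖K‖ * ‖n‖) := by nlinarith [norm_nonneg (K * n)]
    calc 2 * t * ‖K‖ = ‖rt * K + rt * K‖ := hL.symm
      _ ≤ ‖m + rt * rt * (K * n)‖ := hnorm
      _ ≤ ‖m‖ + t ^ 2 * (‖K‖ * ‖n‖) := hR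
  rw [S.norm_eq x, S.norm_eq y, ← hm, ← hn]
  by_cases hn0 : n = 0
  · have hy : y = 0 := S.eq_zero_of_inner_self (hn ▸ hn0)
    have hk0 : k = 0 := by rw [hk, hy]; exact S.inner_zero_right x
    rw [hk0, norm_zero]
    positivity
  · have hnpos : 0 < ‖n‖ := norm_pos_iff.mpr hn0
    have h := key (1 / ‖n‖) (by positivity)
    rw [hKnorm] at h
    have hk2 : ‖k‖ * ‖k‖ ≤ ‖m‖ * ‖n‖ := by
      have hnn : ‖n‖ ≠ 0 := ne_of_gt hnpos
      have h' := mul_le_mul_of_nonneg_right h (le_of_lt hnpos)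
      have e1 : 2 * (1 / ‖n‖) * (‖k‖ * ‖k‖) * ‖n‖ = 2 * (‖k‖ * ‖k‖) := by
        field_simp
      have e2 : (‖m‖ + (1 / ‖n‖) ^ 2 * (‖k‖ * ‖k‖ * ‖n‖)) * ‖n‖
          = ‖m‖ * ‖n‖ + ‖k‖ * ‖k‖ := by
        field_simp; try ring
      rw [e1, e2] at h'
      linarith
    calc ‖k‖ = Real.sqrt (‖k‖ * ‖k‖) := (Real.sqrt_mul_self (norm_nonneg k)).symm
      _ ≤ Real.sqrt (‖m‖ * ‖n‖) := Real.sqrt_le_sqrt hk2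
      _ = Real.sqrt ‖m‖ * Real.sqrt ‖n‖ := Real.sqrt_mul (norm_nonneg m) _

lemma inner_left_continuous (y : M) : Continuous fun z : M => S.inner z y := by
  refine (LipschitzWith.of_dist_le_mul (K := ‖y‖₊) fun z w => ?_).continuous
  rw [dist_eq_norm, dist_eq_norm]
  have h : S.inner z y - S.inner w y = S.inner (z - w) y := (map_sub (S.innerL y) z w).symm
  rw [h]
  calc ‖S.inner (z - w) y‖ ≤ ‖z - w‖ * ‖y‖ := S.cauchy_schwarz _ y
    _ = (‖y‖₊ : ℝ) * ‖z - w‖ := by rw [coe_nnnorm]; ring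

end StdHilbertModule

end Lemma9Aux

open StdHilbertModule in
/-- Lemma 9: over a unital commutative C*-algebra, if `A, B` are injective continuous
additive `τ`-quasi-modular maps with `τ` surjective, `{A xᵢ}` is an orthogonal basis of
`A(H_𝒜)` (with `x 0 ∈ CI`), and `B u` is always a multiple `λ_u • A u`, then `B = λ • A`
for a single `λ ∈ 𝒜`. -/
theorem quasi_modular_proportional {A : Type*} [CommCStarAlgebra A] {M : Type*}
    [NormedAddCommGroup M] [Module A M] (S : StdHilbertModule A M)
    (τ : A → A) (hτ : Function.Surjective τ)
    (Amap Bmap : M → M)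
    (hAinj : Function.Injective Amap) (hBinj : Function.Injective Bmap)
    (hAcont : Continuous Amap) (hBcont : Continuous Bmap)
    (hAadd : ∀ u v : M, Amap (u + v) = Amap u + Amap v)
    (hBadd : ∀ u v : M, Bmap (u + v) = Bmap u + Bmap v)
    (hAqm : ∀ (lam : A) (u : M), Amap (lam • u) = τ lam • Amap u)
    (hBqm : ∀ (lam : A) (u : M), Bmap (lam • u) = τ lam • Bmap u)
    (x : ℕ → M) (hx₀ : S.CI (x 0))
    (horth : ∀ i j : ℕ, i ≠ j → S.inner (Amap (x i)) (Amap (x j)) = 0)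
    (hnz : ∀ i : ℕ, Amap (x i) ≠ 0)
    (hbasis : ∀ z ∈ Set.range Amap, ∃ c : ℕ → A, HasSum (fun i => c i • Amap (x i)) z)
    (hprop : ∀ u : M, ∃ lam : A, Bmap u = lam • Amap u) :
    ∃ lam : A, ∀ u : M, Bmap u = lam • Amap u := by
  classical
  haveI : CompleteSpace M := S.complete
  choose lam hlam using hprop
  let φA : M →+ M := AddMonoidHom.mk' Amap hAadd
  let φB : M →+ M := AddMonoidHom.mk' Bmap hBadd
  have hφB : ∀ z : M, φB z = Bmap z := fun _ => rfl
  -- division by natural numbers commutes with any additive map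
  have hdiv : ∀ (φ : M →+ M) (mm : ℕ), mm ≠ 0 → ∀ v : M,
      φ ((algebraMap ℂ A ((mm : ℂ))⁻¹) • v) = (algebraMap ℂ A ((mm : ℂ))⁻¹) • φ v := by
    intro φ mm hmm v
    set g : A := algebraMap ℂ A ((mm : ℂ))⁻¹ with hgdef
    have hmc : ((mm : ℂ)) ≠ 0 := Nat.cast_ne_zero.mpr hmm
    have hinv : (mm : A) * g = 1 := by
      rw [hgdef, ← map_natCast (algebraMap ℂ A) mm, ← map_mul, mul_inv_cancel₀ hmc, map_one]
    have hinv' : g * (mm : A) = 1 := by rw [mul_comm]; exact hinv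
    have cancel : ∀ z w : M, (mm : A) • z = (mm : A) • w → z = w := by
      intro z w h
      have h2 := congrArg (fun q => g • q) h
      simpa [smul_smul, hinv', one_smul] using h2
    apply cancel
    have h1 : (mm : A) • (g • v) = v := by rw [smul_smul, hinv, one_smul]
    calc (mm : A) • φ (g • v) = mm • φ (g • v) := Nat.cast_smul_eq_nsmul A mm _
      _ = φ (mm • (g • v)) := (map_nsmul φ mm _).symm
      _ = φ ((mm : A) • (g • v)) := by rw [Nat.cast_smul_eq_nsmul]
      _ = φ v := by rw [h1]
      _ = (mm : A) • (g • φ v) := by rw [smul_smul, hinv, one_smul]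
  have hinvmul : ∀ mm : ℕ, mm ≠ 0 →
      algebraMap ℂ A ((mm : ℂ)) * algebraMap ℂ A ((mm : ℂ))⁻¹ = 1 := by
    intro mm hmm
    rw [← map_mul, mul_inv_cancel₀ (Nat.cast_ne_zero.mpr hmm), map_one]
  -- the universal vector u
  set mf : ℕ → ℕ := fun i => ⌈(2 : ℝ) ^ i * (1 + ‖x i‖)⌉₊ + 1 with hmf
  have hmne : ∀ i, mf i ≠ 0 := fun i => Nat.succ_ne_zero _
  have hmpos : ∀ i, (0 : ℝ) < (mf i : ℝ) := fun i =>
    Nat.cast_pos.mpr (Nat.pos_of_ne_zero (hmne i))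
  set γ : ℕ → A := fun i => algebraMap ℂ A (((mf i : ℕ) : ℂ))⁻¹ with hγ
  have hγnorm : ∀ i, ‖γ i‖ ≤ ‖(1 : A)‖ / ((mf i : ℝ)) := by
    intro i
    have h1 : γ i = (((mf i : ℂ))⁻¹) • (1 : A) := Algebra.algebraMap_eq_smul_one _
    rw [h1, norm_smul, norm_inv, Complex.norm_natCast, div_eq_inv_mul]
  have hsummand : ∀ i, ‖γ i • x i‖ ≤ ‖(1 : A)‖ * (1 / 2) ^ i := by
    intro i
    have h1 := S.norm_smul_le_aux (γ i) (x i)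
    have h2 : (2 : ℝ) ^ i * (1 + ‖x i‖) ≤ (mf i : ℝ) := by
      have h3 := Nat.le_ceil ((2 : ℝ) ^ i * (1 + ‖x i‖))
      have h4 : ((⌈(2 : ℝ) ^ i * (1 + ‖x i‖)⌉₊ : ℕ) : ℝ) + 1 = ((mf i : ℕ) : ℝ) := by
        rw [hmf]; push_cast; ring
      linarith
    have h5 : ‖γ i‖ * ‖x i‖ ≤ (‖(1 : A)‖ / (mf i : ℝ)) * ‖x i‖ :=
      mul_le_mul_of_nonneg_right (hγnorm i) (norm_nonneg _)
    have h6 : (‖(1 : A)‖ / (mf i : ℝ)) * ‖x i‖ ≤ ‖(1 : A)‖ * (1 / 2) ^ i := by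
      rw [div_mul_eq_mul_div, div_le_iff₀ (hmpos i)]
      have h7 : (1 / 2 : ℝ) ^ i * (2 : ℝ) ^ i = 1 := by
        rw [← mul_pow]; norm_num
      have h8 := mul_le_mul_of_nonneg_left h2
        (by positivity : (0 : ℝ) ≤ ‖(1 : A)‖ * (1 / 2) ^ i)
      have h9 : ‖(1 : A)‖ * (1 / 2) ^ i * ((2 : ℝ) ^ i * (1 + ‖x i‖))
          = ‖(1 : A)‖ * (1 + ‖x i‖) := by
        linear_combination (‖(1 : A)‖ * (1 + ‖x i‖)) * h7
      rw [h9] at h8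
      nlinarith [norm_nonneg (1 : A), norm_nonneg (x i)]
    linarith
  have hsummable : Summable (fun i => γ i • x i) := by
    apply Summable.of_norm
    exact Summable.of_nonneg_of_le (fun i => norm_nonneg _) hsummand
      (summable_geometric_two.mul_left ‖(1 : A)‖)
  set u : M := ∑' i, γ i • x i with hu_def
  have hu : HasSum (fun i => γ i • x i) u := hsummable.hasSum
  have hAu : HasSum (fun i => γ i • Amap (x i)) (Amap u) := by
    have h := hu.map φA hAcont
    have he : (⇑φA ∘ fun i => γ i • x i) = fun i => γ i • Amap (x i) := by
      funext i
      exact hdiv φA (mf i) (hmne i) (x i)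
    rwa [he] at h
  have hBu : HasSum (fun i => (γ i * lam (x i)) • Amap (x i)) (Bmap u) := by
    have h := hu.map φB hBcont
    have he : (⇑φB ∘ fun i => γ i • x i) = fun i => (γ i * lam (x i)) • Amap (x i) := by
      funext i
      show φB (γ i • x i) = _
      rw [hdiv φB (mf i) (hmne i) (x i), hφB, hlam (x i), smul_smul]
    rwa [he] at h
  -- inner products with A (x j)
  have hAuj : ∀ j, S.inner (Amap u) (Amap (x j))
      = γ j * S.inner (Amap (x j)) (Amap (x j)) := by
    intro j
    have h := hAu.map (S.innerL (Amap (x j))) (S.inner_left_continuous (Amap (x j)))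
    have h0 : ∀ i, i ≠ j → S.inner (γ i • Amap (x i)) (Amap (x j)) = 0 := by
      intro i hij
      rw [S.inner_smul_left, horth i j hij, mul_zero]
    have h1 : HasSum (fun i => S.inner (γ i • Amap (x i)) (Amap (x j)))
        (S.inner (γ j • Amap (x j)) (Amap (x j))) := hasSum_single j h0
    have h2 := h.unique h1
    rw [S.inner_smul_left] at h2
    exact h2
  have hBuj : ∀ j, S.inner (Bmap u) (Amap (x j))
      = γ j * (lam (x j) * S.inner (Amap (x j)) (Amap (x j))) := by
    intro j
    have h := hBu.map (S.innerL (Amap (x j))) (S.inner_left_continuous (Amap (x j)))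
    have h0 : ∀ i, i ≠ j → S.inner ((γ i * lam (x i)) • Amap (x i)) (Amap (x j)) = 0 := by
      intro i hij
      rw [S.inner_smul_left, horth i j hij, mul_zero]
    have h1 : HasSum (fun i => S.inner ((γ i * lam (x i)) • Amap (x i)) (Amap (x j)))
        (S.inner ((γ j * lam (x j)) • Amap (x j)) (Amap (x j))) := hasSum_single j h0
    have h2 : S.inner (Bmap u) (Amap (x j))
        = (γ j * lam (x j)) * S.inner (Amap (x j)) (Amap (x j)) := by
      have h3 := h.unique h1
      rw [S.inner_smul_left] at h3
      exact h3
    rw [h2]; ring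
  -- λ := lam u agrees with lam (x j) against ⟨A x j, A x j⟩
  have hstep1 : ∀ j, lam u * S.inner (Amap (x j)) (Amap (x j))
      = lam (x j) * S.inner (Amap (x j)) (Amap (x j)) := by
    intro j
    have hBA : S.inner (Bmap u) (Amap (x j))
        = lam u * (γ j * S.inner (Amap (x j)) (Amap (x j))) := by
      rw [hlam u, S.inner_smul_left, hAuj j]
    have h2 : lam u * (γ j * S.inner (Amap (x j)) (Amap (x j)))
        = γ j * (lam (x j) * S.inner (Amap (x j)) (Amap (x j))) := by
      rw [← hBA, hBuj j]
    have hinv := hinvmul (mf j) (hmne j)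
    have hγj : algebraMap ℂ A ((mf j : ℂ)) * γ j = 1 := by rw [hγ]; exact hinv
    calc lam u * S.inner (Amap (x j)) (Amap (x j))
        = (algebraMap ℂ A ((mf j : ℂ)) * γ j)
            * (lam u * S.inner (Amap (x j)) (Amap (x j))) := by rw [hγj, one_mul]
      _ = algebraMap ℂ A ((mf j : ℂ))
            * (lam u * (γ j * S.inner (Amap (x j)) (Amap (x j)))) := by ring
      _ = algebraMap ℂ A ((mf j : ℂ))
            * (γ j * (lam (x j) * S.inner (Amap (x j)) (Amap (x j)))) := by rw [h2]
      _ = (algebraMap ℂ A ((mf j : ℂ)) * γ j)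
            * (lam (x j) * S.inner (Amap (x j)) (Amap (x j))) := by ring
      _ = lam (x j) * S.inner (Amap (x j)) (Amap (x j)) := by rw [hγj, one_mul]
  -- conclusion
  refine ⟨lam u, fun v => ?_⟩
  obtain ⟨c, hc⟩ := hbasis (Amap v) ⟨v, rfl⟩
  have hkj : ∀ j, S.inner (Amap v) (Amap (x j))
      = c j * S.inner (Amap (x j)) (Amap (x j)) := by
    intro j
    have h := hc.map (S.innerL (Amap (x j))) (S.inner_left_continuous (Amap (x j)))
    have h0 : ∀ i, i ≠ j → S.inner (c i • Amap (x i)) (Amap (x j)) = 0 := by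
      intro i hij
      rw [S.inner_smul_left, horth i j hij, mul_zero]
    have h1 : HasSum (fun i => S.inner (c i • Amap (x i)) (Amap (x j)))
        (S.inner (c j • Amap (x j)) (Amap (x j))) := hasSum_single j h0
    have h2 := h.unique h1
    rw [S.inner_smul_left] at h2
    exact h2
  -- key step
  have hH : ∀ j, lam v * (c j * S.inner (Amap (x j)) (Amap (x j)))
      = lam (x j) * (c j * S.inner (Amap (x j)) (Amap (x j))) := by
    intro j
    obtain ⟨α, hα⟩ := hτ (-(c j))
    have hAz : Amap (α • x j) = (-(c j)) • Amap (x j) := by rw [hAqm, hα]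
    have hBz : Bmap (α • x j) = ((-(c j)) * lam (x j)) • Amap (x j) := by
      rw [hBqm, hα, hlam (x j), smul_smul]
    have heq := hlam (v + α • x j)
    rw [hBadd, hAadd, hBz, hAz, hlam v] at heq
    have h := congrArg (fun z => S.inner z (Amap (x j))) heq
    simp only [S.inner_add_left, S.inner_smul_left] at h
    rw [hkj j] at h
    linear_combination h
  -- finish: w := B v - lam u • A v is orthogonal to everything
  set w : M := Bmap v - lam u • Amap v with hw
  have hfin : ∀ j, S.inner w (Amap (x j)) = 0 := by
    intro j
    have hms : S.inner w (Amap (x j))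
        = S.inner (Bmap v) (Amap (x j)) - S.inner (lam u • Amap v) (Amap (x j)) := by
      rw [hw]
      exact map_sub (S.innerL (Amap (x j))) (Bmap v) (lam u • Amap v)
    rw [hms, hlam v, S.inner_smul_left, S.inner_smul_left, hkj j]
    linear_combination hH j - c j * hstep1 j
  have hAvw : S.inner (Amap v) w = 0 := by
    have h := hc.map (S.innerL w) (S.inner_left_continuous w)
    have h0 : (fun i => S.inner (c i • Amap (x i)) w) = fun _ => (0 : A) := by
      funext i
      rw [S.inner_smul_left, ← S.star_inner w (Amap (x i)), hfin i, star_zero, mul_zero]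
    have h1 : HasSum (fun i => S.inner (c i • Amap (x i)) w) 0 := by
      rw [h0]; exact hasSum_zero
    exact h.unique h1
  have hww : S.inner w w = 0 := by
    have hms : S.inner w w
        = S.inner (Bmap v) w - S.inner (lam u • Amap v) w := by
      nth_rewrite 1 [hw]
      exact map_sub (S.innerL w) (Bmap v) (lam u • Amap v)
    rw [hms, hlam v, S.inner_smul_left, S.inner_smul_left, hAvw, mul_zero, mul_zero, sub_zero]
  have hw0 : w = 0 := S.eq_zero_of_inner_self hww
  rw [hw, sub_eq_zero] at hw0
  exact hw0
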